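/- Let 0<q<1 and let f(x,y) be defined for x,y>0 and satisfy: (i) f(x+1,y+1) = ((1−q^x)(1−q^y)) / ((1−q^{x+y})(1−q^{x+y+1})) · f(x,y); (ii) f(x,y) < f(u,v) whenever x>u>M and y>v>M, for some M≥0; (iii) f(1,1)=1. Then f(x,y) = B_q(x,y) for all x,y>0. -/

import Mathlib

open Real Set

/-- The infinite q-Pochhammer symbol `(a;q)_∞ = ∏_{k≥0} (1 - a q^k)`. -/
noncomputable def qPochInf (a q : ℝ) : ℝ := ∏' k : ℕ, (1 - a * q ^ k)

/-- Jackson's q-gamma function for `0 < q < 1`. -/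
noncomputable def qGamma (q x : ℝ) : ℝ :=
  qPochInf q q / qPochInf (q ^ x) q * (1 - q) ^ (1 - x)

/-- The q-beta function `B_q(x,y) = Γ_q(x)Γ_q(y)/Γ_q(x+y)`, for `0 < q < 1`. -/
noncomputable def qBeta (q x y : ℝ) : ℝ := qGamma q x * qGamma q y / qGamma q (x + y)

section Poch
variable {q : ℝ} (hq0 : 0 < q) (hq1 : q < 1)
include hq0 hq1

open Filter

lemma factor_pos {a : ℝ} (ha0 : 0 ≤ a) (ha1 : a < 1) (k : ℕ) :
    0 < 1 - a * q ^ k := by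
  have h1 : q ^ k ≤ 1 := pow_le_one₀ hq0.le hq1.le
  have : a * q ^ k ≤ a * 1 := by
    apply mul_le_mul_of_nonneg_left h1 ha0
  nlinarith

lemma neg_log_le {a : ℝ} (ha0 : 0 ≤ a) (ha1 : a < 1) (k : ℕ) :
    -Real.log (1 - a * q ^ k) ≤ a * q ^ k / (1 - a) := by
  have hf := factor_pos hq0 hq1 ha0 ha1 k
  have hinv : Real.log ((1 - a * q ^ k)⁻¹) ≤ (1 - a * q ^ k)⁻¹ - 1 :=
    Real.log_le_sub_one_of_pos (by positivity)
  rw [Real.log_inv] at hinv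
  have h2 : (1 - a * q ^ k)⁻¹ - 1 = (a * q ^ k) / (1 - a * q ^ k) := by
    field_simp
    ring
  rw [h2] at hinv
  refine hinv.trans ?_
  apply div_le_div_of_nonneg_left (by positivity) (by linarith) ?_
  have hqk : q ^ k ≤ 1 := pow_le_one₀ hq0.le hq1.le
  nlinarith

lemma summable_log {a : ℝ} (ha0 : 0 ≤ a) (ha1 : a < 1) :
    Summable (fun k : ℕ => Real.log (1 - a * q ^ k)) := by
  rw [← summable_neg_iff]
  apply Summable.of_nonneg_of_le (f := fun k : ℕ => a * q ^ k / (1 - a))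
  · intro k
    simp only [neg_nonneg]
    apply Real.log_nonpos
    · have := factor_pos hq0 hq1 ha0 ha1 k
      linarith
    · nlinarith [pow_nonneg hq0.le k]
  · exact fun k => neg_log_le hq0 hq1 ha0 ha1 k
  · apply Summable.div_const
    exact (summable_geometric_of_lt_one hq0.le hq1).mul_left a

lemma qPochInf_eq_exp {a : ℝ} (ha0 : 0 ≤ a) (ha1 : a < 1) :
    qPochInf a q = Real.exp (∑' k : ℕ, Real.log (1 - a * q ^ k)) := by
  have h := (summable_log hq0 hq1 ha0 ha1).hasSum.rexp
  have h2 : (rexp ∘ fun k : ℕ => Real.log (1 - a * q ^ k)) =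
      fun k : ℕ => (1 - a * q ^ k) := by
    ext k
    exact Real.exp_log (factor_pos hq0 hq1 ha0 ha1 k)
  rw [h2] at h
  exact h.tprod_eq.symm ▸ rfl

lemma qPochInf_pos {a : ℝ} (ha0 : 0 ≤ a) (ha1 : a < 1) : 0 < qPochInf a q := by
  rw [qPochInf_eq_exp hq0 hq1 ha0 ha1]; exact Real.exp_pos _

lemma qPochInf_le_one {a : ℝ} (ha0 : 0 ≤ a) (ha1 : a < 1) : qPochInf a q ≤ 1 := by
  rw [qPochInf_eq_exp hq0 hq1 ha0 ha1]
  calc Real.exp (∑' k : ℕ, Real.log (1 - a * q ^ k)) ≤ Real.exp 0 := by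
        apply Real.exp_le_exp.2
        apply tsum_nonpos
        intro k
        apply Real.log_nonpos
        · linarith [factor_pos hq0 hq1 ha0 ha1 k]
        · nlinarith [pow_nonneg hq0.le k]
    _ = 1 := Real.exp_zero

lemma qPochInf_ge {a : ℝ} (ha0 : 0 ≤ a) (ha1 : a < 1) :
    Real.exp (-(a / ((1 - a) * (1 - q)))) ≤ qPochInf a q := by
  rw [qPochInf_eq_exp hq0 hq1 ha0 ha1]
  apply Real.exp_le_exp.2
  have hs2 : Summable (fun k : ℕ => a / (1 - a) * q ^ k) :=
    (summable_geometric_of_lt_one hq0.le hq1).mul_left _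
  have hb : ∀ k : ℕ, -(a / (1 - a) * q ^ k) ≤ Real.log (1 - a * q ^ k) := by
    intro k
    have h1 := neg_log_le hq0 hq1 ha0 ha1 k
    have h2 : a * q ^ k / (1 - a) = a / (1 - a) * q ^ k := by ring
    linarith [h2 ▸ h1]
  have := Summable.tsum_le_tsum hb hs2.neg (summable_log hq0 hq1 ha0 ha1)
  refine le_trans (le_of_eq ?_) this
  rw [tsum_neg, tsum_mul_left, tsum_geometric_of_lt_one hq0.le hq1]
  have ha' : (1 - a) ≠ 0 := by linarith
  have hq' : (1 - q) ≠ 0 := by linarith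
  field_simp

lemma qPochInf_shift {a : ℝ} (ha0 : 0 ≤ a) (ha1 : a < 1) :
    qPochInf a q = (1 - a) * qPochInf (a * q) q := by
  have haq0 : 0 ≤ a * q := by positivity
  have haq1 : a * q < 1 := by nlinarith
  rw [qPochInf_eq_exp hq0 hq1 ha0 ha1, qPochInf_eq_exp hq0 hq1 haq0 haq1]
  have hsum := summable_log hq0 hq1 ha0 ha1
  rw [Summable.tsum_eq_zero_add hsum]
  have h2 : (fun k : ℕ => Real.log (1 - a * q ^ (k + 1))) =
      fun k : ℕ => Real.log (1 - a * q * q ^ k) := by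
    ext k; ring_nf
  simp only [pow_zero, mul_one]
  rw [Real.exp_add, Real.exp_log (by linarith)]
  congr 1
  rw [← h2]

lemma qPochInf_tendsto {a : ℕ → ℝ} (ha0 : ∀ n, 0 ≤ a n) (ha1 : ∀ n, a n < 1)
    (ha : Filter.Tendsto a Filter.atTop (nhds 0)) :
    Filter.Tendsto (fun n => qPochInf (a n) q) Filter.atTop (nhds 1) := by
  apply tendsto_of_tendsto_of_tendsto_of_le_of_le'
    (g := fun n => Real.exp (-(a n / ((1 - a n) * (1 - q))))) (h := fun _ => (1:ℝ))
  · have h1 : Tendsto (fun n => (1 - a n) * (1 - q)) atTop (nhds ((1 - 0) * (1 - q))) :=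
      (tendsto_const_nhds.sub ha).mul tendsto_const_nhds
    have h2 : Tendsto (fun n => -(a n / ((1 - a n) * (1 - q)))) atTop (nhds 0) := by
      have := (ha.div h1 (by norm_num; linarith)).neg
      simpa using this
    have h3 := (Real.continuous_exp.tendsto 0).comp h2
    simpa [Function.comp_def] using h3
  · exact tendsto_const_nhds
  · filter_upwards with n; exact qPochInf_ge hq0 hq1 (ha0 n) (ha1 n)
  · filter_upwards with n; exact qPochInf_le_one hq0 hq1 (ha0 n) (ha1 n)

lemma qPochInf_rpow_pos (x : ℝ) (hx : 0 < x) : 0 < qPochInf (q ^ x) q :=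
  qPochInf_pos hq0 hq1 (Real.rpow_pos_of_pos hq0 x).le (Real.rpow_lt_one hq0.le hq1 hx)

lemma qPochInf_rpow_shift {x : ℝ} (hx : 0 < x) :
    qPochInf (q ^ x) q = (1 - q ^ x) * qPochInf (q ^ (x + 1)) q := by
  rw [Real.rpow_add hq0, Real.rpow_one]
  exact qPochInf_shift hq0 hq1 (Real.rpow_pos_of_pos hq0 x).le
    (Real.rpow_lt_one hq0.le hq1 hx)

lemma qBeta_formula {x y : ℝ} (hx : 0 < x) (hy : 0 < y) :
    qBeta q x y = (1 - q) * qPochInf q q * qPochInf (q ^ (x + y)) q /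
      (qPochInf (q ^ x) q * qPochInf (q ^ y) q) := by
  have h1q : (0:ℝ) < 1 - q := by linarith
  have hP : 0 < qPochInf q q := qPochInf_pos hq0 hq1 hq0.le hq1
  have hPx := qPochInf_rpow_pos hq0 hq1 x hx
  have hPy := qPochInf_rpow_pos hq0 hq1 y hy
  have hPxy := qPochInf_rpow_pos hq0 hq1 (x + y) (by linarith)
  have hC : (0:ℝ) < (1 - q) ^ (1 - (x + y)) := Real.rpow_pos_of_pos h1q _
  have hCx : (0:ℝ) < (1 - q) ^ (1 - x) := Real.rpow_pos_of_pos h1q _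
  have hCy : (0:ℝ) < (1 - q) ^ (1 - y) := Real.rpow_pos_of_pos h1q _
  have key : (1 - q) ^ (1 - x) * (1 - q) ^ (1 - y) = (1 - q) * (1 - q) ^ (1 - (x + y)) := by
    rw [← Real.rpow_add h1q, show (1:ℝ) - x + (1 - y) = 1 + (1 - (x + y)) by ring,
      Real.rpow_add h1q, Real.rpow_one]
  unfold qBeta qGamma
  field_simp
  linear_combination key

lemma qBeta_pos {x y : ℝ} (hx : 0 < x) (hy : 0 < y) : 0 < qBeta q x y := by
  rw [qBeta_formula hq0 hq1 hx hy]
  have hP : 0 < qPochInf q q := qPochInf_pos hq0 hq1 hq0.le hq1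
  have hPx := qPochInf_rpow_pos hq0 hq1 x hx
  have hPy := qPochInf_rpow_pos hq0 hq1 y hy
  have hPxy := qPochInf_rpow_pos hq0 hq1 (x + y) (by linarith)
  have h1q : (0:ℝ) < 1 - q := by linarith
  positivity

lemma qBeta_rec {x y : ℝ} (hx : 0 < x) (hy : 0 < y) :
    qBeta q (x + 1) (y + 1) =
      ((1 - q ^ x) * (1 - q ^ y)) / ((1 - q ^ (x + y)) * (1 - q ^ (x + y + 1))) *
        qBeta q x y := by
  have h1q : (0:ℝ) < 1 - q := by linarith
  have hqx : q ^ x < 1 := Real.rpow_lt_one hq0.le hq1 hx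
  have hqy : q ^ y < 1 := Real.rpow_lt_one hq0.le hq1 hy
  have hqxy : q ^ (x + y) < 1 := Real.rpow_lt_one hq0.le hq1 (by linarith)
  have hqxy1 : q ^ (x + y + 1) < 1 := Real.rpow_lt_one hq0.le hq1 (by linarith)
  have hP : 0 < qPochInf q q := qPochInf_pos hq0 hq1 hq0.le hq1
  have hPx1 := qPochInf_rpow_pos hq0 hq1 (x + 1) (by linarith)
  have hPy1 := qPochInf_rpow_pos hq0 hq1 (y + 1) (by linarith)
  have hPxy2 := qPochInf_rpow_pos hq0 hq1 (x + y + 2) (by linarith)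
  have e1 := qPochInf_rpow_shift hq0 hq1 hx
  have e2 := qPochInf_rpow_shift hq0 hq1 hy
  have e3 := qPochInf_rpow_shift hq0 hq1 (show (0:ℝ) < x + y by linarith)
  have e4 := qPochInf_rpow_shift hq0 hq1 (show (0:ℝ) < x + y + 1 by linarith)
  rw [qBeta_formula hq0 hq1 hx hy, qBeta_formula hq0 hq1 (by linarith) (by linarith),
    show x + 1 + (y + 1) = (x + y + 1) + 1 by ring, e1, e2, e3, e4,
    show x + y + 1 + 1 = x + y + 2 by ring]
  set A := qPochInf q q
  set B1 := qPochInf (q ^ (x + 1)) q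
  set B2 := qPochInf (q ^ (y + 1)) q
  set C := qPochInf (q ^ (x + y + 2)) q
  set s := q ^ x
  set t := q ^ y
  set u := q ^ (x + y)
  set v := q ^ (x + y + 1)
  have h1 : (1:ℝ) - u ≠ 0 := by simp only [u]; nlinarith
  have h2 : (1:ℝ) - v ≠ 0 := by simp only [v]; nlinarith
  have h3 : (1:ℝ) - s ≠ 0 := by simp only [s]; nlinarith
  have h4 : (1:ℝ) - t ≠ 0 := by simp only [t]; nlinarith
  have hd2 : (1 - u) * (1 - v) * ((1 - s) * B1 * ((1 - t) * B2)) ≠ 0 :=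
    mul_ne_zero (mul_ne_zero h1 h2)
      (mul_ne_zero (mul_ne_zero h3 hPx1.ne') (mul_ne_zero h4 hPy1.ne'))
  rw [div_mul_div_comm, div_eq_div_iff (mul_ne_zero hPx1.ne' hPy1.ne') hd2]
  ring

lemma qBeta_one_one : qBeta q 1 1 = 1 := by
  have h1q : (0:ℝ) < 1 - q := by linarith
  have hP : 0 < qPochInf q q := qPochInf_pos hq0 hq1 hq0.le hq1
  have e := qPochInf_rpow_shift hq0 hq1 (show (0:ℝ) < 1 by norm_num)
  have hP2 := qPochInf_rpow_pos hq0 hq1 (1 + 1 : ℝ) (by norm_num)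
  rw [qBeta_formula hq0 hq1 one_pos one_pos, Real.rpow_one] at *
  rw [show (1:ℝ) + 1 = (2:ℝ) by norm_num] at *
  rw [e]
  have hd : ((1 - q) * qPochInf (q ^ (2:ℝ)) q) * ((1 - q) * qPochInf (q ^ (2:ℝ)) q) ≠ 0 :=
    ne_of_gt (mul_pos (mul_pos h1q hP2) (mul_pos h1q hP2))
  rw [div_eq_one_iff_eq hd]
  ring

lemma qBeta_tendsto {x y : ℝ} (hx : 0 < x) (hy : 0 < y) :
    Filter.Tendsto (fun n : ℕ => qBeta q (x + n) (y + n)) Filter.atTop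
      (nhds ((1 - q) * qPochInf q q)) := by
  have hP : 0 < qPochInf q q := qPochInf_pos hq0 hq1 hq0.le hq1
  have haux : ∀ s : ℝ, 0 < s → Tendsto (fun n : ℕ => qPochInf (q ^ (s + n)) q) atTop (nhds 1) := by
    intro s hs
    apply qPochInf_tendsto hq0 hq1
    · intro n; exact (Real.rpow_pos_of_pos hq0 _).le
    · intro n; exact Real.rpow_lt_one hq0.le hq1 (by positivity)
    · have heq : (fun n : ℕ => q ^ (s + (n:ℝ))) = fun n : ℕ => q ^ s * q ^ n := by
        ext n; rw [Real.rpow_add hq0, Real.rpow_natCast]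
      rw [heq]
      have := (tendsto_pow_atTop_nhds_zero_of_lt_one hq0.le hq1).const_mul (q ^ s)
      simpa using this
  have hsum : Tendsto (fun n : ℕ => qPochInf (q ^ ((x + n) + (y + n))) q) atTop (nhds 1) := by
    apply qPochInf_tendsto hq0 hq1
    · intro n; exact (Real.rpow_pos_of_pos hq0 _).le
    · intro n; exact Real.rpow_lt_one hq0.le hq1 (by positivity)
    · have heq : (fun n : ℕ => q ^ ((x + (n:ℝ)) + (y + (n:ℝ)))) =
          fun n : ℕ => q ^ (x + y) * (q * q) ^ n := by
        ext n
        rw [show (x + (n:ℝ)) + (y + (n:ℝ)) = (x + y) + ((2 * n : ℕ) : ℝ) by push_cast; ring]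
        rw [Real.rpow_add hq0 (x + y) ((2 * n : ℕ) : ℝ)]
        rw [Real.rpow_natCast, pow_mul, sq]
      rw [heq]
      have h0 : Tendsto (fun n : ℕ => (q * q) ^ n) atTop (nhds (0 : ℝ)) :=
        tendsto_pow_atTop_nhds_zero_of_lt_one (by positivity) (by nlinarith)
      have := h0.const_mul (q ^ (x + y))
      simpa using this
  have hform : (fun n : ℕ => qBeta q (x + n) (y + n)) = fun n : ℕ =>
      (1 - q) * qPochInf q q * qPochInf (q ^ ((x + n) + (y + n))) q /
        (qPochInf (q ^ (x + (n:ℝ))) q * qPochInf (q ^ (y + (n:ℝ))) q) := by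
    ext n
    exact qBeta_formula hq0 hq1 (by positivity) (by positivity)
  rw [hform]
  have hnum : Tendsto (fun n : ℕ => (1 - q) * qPochInf q q *
      qPochInf (q ^ ((x + n) + (y + n))) q) atTop (nhds ((1 - q) * qPochInf q q * 1)) :=
    tendsto_const_nhds.mul hsum
  have hden : Tendsto (fun n : ℕ => qPochInf (q ^ (x + (n:ℝ))) q *
      qPochInf (q ^ (y + (n:ℝ))) q) atTop (nhds (1 * 1)) :=
    (haux x hx).mul (haux y hy)
  have := hnum.div hden (by norm_num)
  rw [mul_one, mul_one, div_one] at this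
  exact this

end Poch

open Filter in
theorem stmt18 (q : ℝ) (hq0 : 0 < q) (hq1 : q < 1)
    (f : ℝ → ℝ → ℝ) (M : ℝ) (hM : 0 ≤ M)
    (hi : ∀ x > (0 : ℝ), ∀ y > (0 : ℝ), f (x + 1) (y + 1) =
      ((1 - q ^ x) * (1 - q ^ y)) / ((1 - q ^ (x + y)) * (1 - q ^ (x + y + 1))) * f x y)
    (hii : ∀ x u y v : ℝ, M < u → u < x → M < v → v < y → f x y < f u v)
    (hiii : f 1 1 = 1) :
    ∀ x > (0 : ℝ), ∀ y > (0 : ℝ), f x y = qBeta q x y := by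
  intro x hx y hy
  have hBrec : ∀ u > (0:ℝ), ∀ v > (0:ℝ), qBeta q (u + 1) (v + 1) =
      ((1 - q ^ u) * (1 - q ^ v)) / ((1 - q ^ (u + v)) * (1 - q ^ (u + v + 1))) *
        qBeta q u v := fun u hu v hv => qBeta_rec hq0 hq1 hu hv
  have hprod : ∀ g : ℝ → ℝ → ℝ,
      (∀ u > (0:ℝ), ∀ v > (0:ℝ), g (u + 1) (v + 1) =
        ((1 - q ^ u) * (1 - q ^ v)) / ((1 - q ^ (u + v)) * (1 - q ^ (u + v + 1))) * g u v) →
      ∀ n : ℕ, g (x + n) (y + n) =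
        (∏ k ∈ Finset.range n, ((1 - q ^ (x + k)) * (1 - q ^ (y + k))) /
          ((1 - q ^ ((x + k) + (y + k))) * (1 - q ^ ((x + k) + (y + k) + 1)))) * g x y := by
    intro g hg n
    induction n with
    | zero => simp
    | succ n ih =>
      have h1 : x + ((n + 1 : ℕ) : ℝ) = (x + n) + 1 := by push_cast; ring
      have h2 : y + ((n + 1 : ℕ) : ℝ) = (y + n) + 1 := by push_cast; ring
      rw [h1, h2, hg (x + n) (by positivity) (y + n) (by positivity), ih,
        Finset.prod_range_succ]
      ring
  have hfn := hprod f hi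
  have hBn := hprod (qBeta q) hBrec
  have hdiag : ∀ n : ℕ, f (1 + n) (1 + n) = qBeta q (1 + n) (1 + n) := by
    intro n
    induction n with
    | zero =>
      simp only [Nat.cast_zero, add_zero]
      rw [hiii, qBeta_one_one hq0 hq1]
    | succ n ih =>
      have h1 : (1:ℝ) + ((n + 1 : ℕ) : ℝ) = (1 + n) + 1 := by push_cast; ring
      rw [h1, hi (1 + n) (by positivity) (1 + n) (by positivity),
        hBrec (1 + n) (by positivity) (1 + n) (by positivity), ih]
  set L := (1 - q) * qPochInf q q with hLdef
  have hLpos : 0 < L := mul_pos (by linarith) (qPochInf_pos hq0 hq1 hq0.le hq1)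
  have hB1 : Tendsto (fun n : ℕ => qBeta q (1 + n) (1 + n)) atTop (nhds L) :=
    qBeta_tendsto hq0 hq1 one_pos one_pos
  have hf1 : Tendsto (fun n : ℕ => f (1 + n) (1 + n)) atTop (nhds L) :=
    hB1.congr (fun n => (hdiag n).symm)
  obtain ⟨K, hK⟩ := exists_nat_gt (max x y)
  have hfK : Tendsto (fun n : ℕ => f (1 + ((n + K : ℕ) : ℝ)) (1 + ((n + K : ℕ) : ℝ)))
      atTop (nhds L) := hf1.comp (tendsto_add_atTop_nat K)
  obtain ⟨N, hN⟩ := exists_nat_gt M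
  have hFtend : Tendsto (fun n : ℕ => f (x + ((n + 1 : ℕ) : ℝ)) (y + ((n + 1 : ℕ) : ℝ)))
      atTop (nhds L) := by
    apply tendsto_of_tendsto_of_tendsto_of_le_of_le' hfK hf1
    · filter_upwards [eventually_ge_atTop N] with n hn
      have hn' : (N : ℝ) ≤ n := Nat.cast_le.mpr hn
      apply le_of_lt
      apply hii
      · push_cast; linarith
      · push_cast
        have h1 := le_max_left x y
        linarith
      · push_cast; linarith
      · push_cast
        have h1 := le_max_right x y
        linarith
    · filter_upwards [eventually_ge_atTop N] with n hn
      have hn' : (N : ℝ) ≤ n := Nat.cast_le.mpr hn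
      apply le_of_lt
      apply hii
      · push_cast; linarith
      · push_cast; linarith
      · push_cast; linarith
      · push_cast; linarith
  have hG : Tendsto (fun n : ℕ => qBeta q (x + ((n + 1 : ℕ) : ℝ)) (y + ((n + 1 : ℕ) : ℝ)))
      atTop (nhds L) := (qBeta_tendsto hq0 hq1 hx hy).comp (tendsto_add_atTop_nat 1)
  have hBxy : 0 < qBeta q x y := qBeta_pos hq0 hq1 hx hy
  have hPt : Tendsto (fun n : ℕ => (∏ k ∈ Finset.range (n + 1),
      ((1 - q ^ (x + k)) * (1 - q ^ (y + k))) /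
        ((1 - q ^ ((x + k) + (y + k))) * (1 - q ^ ((x + k) + (y + k) + 1)))) * f x y)
      atTop (nhds (L / qBeta q x y * f x y)) := by
    apply Tendsto.mul_const
    have heq : (fun n : ℕ => ∏ k ∈ Finset.range (n + 1),
        ((1 - q ^ (x + k)) * (1 - q ^ (y + k))) /
          ((1 - q ^ ((x + k) + (y + k))) * (1 - q ^ ((x + k) + (y + k) + 1)))) =
        fun n : ℕ => qBeta q (x + ((n + 1 : ℕ) : ℝ)) (y + ((n + 1 : ℕ) : ℝ)) / qBeta q x y := by
      funext n
      rw [hBn (n + 1), mul_div_assoc, div_self hBxy.ne', mul_one]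
    rw [heq]
    exact hG.div_const _
  have hFeq : Tendsto (fun n : ℕ => (∏ k ∈ Finset.range (n + 1),
      ((1 - q ^ (x + k)) * (1 - q ^ (y + k))) /
        ((1 - q ^ ((x + k) + (y + k))) * (1 - q ^ ((x + k) + (y + k) + 1)))) * f x y)
      atTop (nhds L) := hFtend.congr (fun n => hfn (n + 1))
  have hkey : L / qBeta q x y * f x y = L := tendsto_nhds_unique hPt hFeq
  have hBne : qBeta q x y ≠ 0 := hBxy.ne'
  field_simp at hkey
  exact hkey
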